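/- For integers b, c and every positive integer n, the generalized central trinomial coefficients satisfy the recurrence (n+1) * T_{n+1}(b,c) = (2n+1) * b * T_n(b,c) - n * (b^2 - 4c) * T_{n-1}(b,c). -/
import Mathlib

/-- The generalized central trinomial coefficient `T_n(b,c)`, the coefficient of `x^n`
in `(x^2 + b x + c)^n`. -/
def genTrinomial (b c : ℤ) (n : ℕ) : ℤ :=
  ∑ k ∈ Finset.range (n / 2 + 1),
    (n.choose (2 * k) : ℤ) * ((2 * k).choose k : ℤ) * b ^ (n - 2 * k) * c ^ k

open Nat in
private lemma keyA (a k : ℕ) :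
    ((a:ℤ)+2*k+4) * ((a+2*k+4).choose (2*k+2)) * ((2*k+2).choose (k+1))
    - (2*(a:ℤ)+4*k+7) * ((a+2*k+3).choose (2*k+2)) * ((2*k+2).choose (k+1))
    + ((a:ℤ)+2*k+3) * ((a+2*k+2).choose (2*k+2)) * ((2*k+2).choose (k+1))
    = 4*((a:ℤ)+2*k+3) * ((a+2*k+2).choose (2*k)) * ((2*k).choose k) := by
  have q : ((a:ℚ)+2*k+4) * ((a+2*k+4).choose (2*k+2)) * ((2*k+2).choose (k+1))
    - (2*(a:ℚ)+4*k+7) * ((a+2*k+3).choose (2*k+2)) * ((2*k+2).choose (k+1))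
    + ((a:ℚ)+2*k+3) * ((a+2*k+2).choose (2*k+2)) * ((2*k+2).choose (k+1))
    = 4*((a:ℚ)+2*k+3) * ((a+2*k+2).choose (2*k)) * ((2*k).choose k) := by
    have h1 : ((a+2*k+4).choose (2*k+2) : ℚ) = (a+2*k+4)! / ((2*k+2)! * ((a+2):ℕ)!) := by
      rw [Nat.cast_choose ℚ (by omega)]
      congr 4
      omega
    have h2 : ((a+2*k+3).choose (2*k+2) : ℚ) = (a+2*k+3)! / ((2*k+2)! * ((a+1):ℕ)!) := by
      rw [Nat.cast_choose ℚ (by omega)]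
      congr 4
      omega
    have h3 : ((a+2*k+2).choose (2*k+2) : ℚ) = (a+2*k+2)! / ((2*k+2)! * (a:ℕ)!) := by
      rw [Nat.cast_choose ℚ (by omega)]
      congr 4
      omega
    have h4 : ((a+2*k+2).choose (2*k) : ℚ) = (a+2*k+2)! / ((2*k)! * ((a+2):ℕ)!) := by
      rw [Nat.cast_choose ℚ (by omega)]
      congr 4
      omega
    have h5 : ((2*k+2).choose (k+1) : ℚ) = (2*k+2)! / ((k+1)! * (k+1)!) := by
      rw [Nat.cast_choose ℚ (by omega)]
      congr 4
      omega
    have h6 : ((2*k).choose k : ℚ) = (2*k)! / ((k)! * (k)!) := by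
      rw [Nat.cast_choose ℚ (by omega)]
      congr 4
      omega
    rw [h1, h2, h3, h4, h5, h6]
    have e1 : ((a+2*k+4)! : ℚ) = ((a:ℚ)+2*k+4) * ((a:ℚ)+2*k+3) * (a+2*k+2)! := by
      rw [show a+2*k+4 = (a+2*k+3)+1 from rfl, show a+2*k+3 = (a+2*k+2)+1 from rfl,
        Nat.factorial_succ, Nat.factorial_succ]
      push_cast; ring
    have e2 : ((a+2*k+3)! : ℚ) = ((a:ℚ)+2*k+3) * (a+2*k+2)! := by
      rw [show a+2*k+3 = (a+2*k+2)+1 from rfl, Nat.factorial_succ]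
      push_cast; ring
    have e3 : (((a+2):ℕ)! : ℚ) = ((a:ℚ)+2) * ((a:ℚ)+1) * (a)! := by
      rw [show a+2 = (a+1)+1 from rfl, Nat.factorial_succ, Nat.factorial_succ]
      push_cast; ring
    have e4 : (((a+1):ℕ)! : ℚ) = ((a:ℚ)+1) * (a)! := by
      rw [Nat.factorial_succ]; push_cast; ring
    have e5 : ((2*k+2)! : ℚ) = (2*(k:ℚ)+2) * (2*(k:ℚ)+1) * (2*k)! := by
      rw [show 2*k+2 = (2*k+1)+1 from rfl, Nat.factorial_succ, Nat.factorial_succ]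
      push_cast; ring
    have e6 : (((k+1):ℕ)! : ℚ) = ((k:ℚ)+1) * (k)! := by
      rw [Nat.factorial_succ]; push_cast; ring
    rw [e1, e2, e3, e4, e5, e6]
    have f1 : ((a+2*k+2)! : ℚ) ≠ 0 := by positivity
    have f2 : ((a:ℕ)! : ℚ) ≠ 0 := by positivity
    have f3 : ((2*k)! : ℚ) ≠ 0 := by positivity
    have f4 : ((k:ℕ)! : ℚ) ≠ 0 := by positivity
    have g1 : ((a:ℚ)+2) ≠ 0 := by positivity
    have g2 : ((a:ℚ)+1) ≠ 0 := by positivity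
    have g3 : ((k:ℚ)+1) ≠ 0 := by positivity
    have g4 : (2*(k:ℚ)+2) ≠ 0 := by positivity
    have g5 : (2*(k:ℚ)+1) ≠ 0 := by positivity
    field_simp
    ring
  exact_mod_cast q

private lemma centralStep (k : ℕ) :
    (k+1) * ((2*(k+1)).choose (k+1)) = 2 * (2*k+1) * ((2*k).choose k) := by
  have := Nat.succ_mul_centralBinom_succ k
  simpa [Nat.centralBinom] using this

private lemma key (p k : ℕ) :
    ((p:ℤ)+2) * ((p+2).choose (2*k+2)) * ((2*k+2).choose (k+1))
    - (2*(p:ℤ)+3) * ((p+1).choose (2*k+2)) * ((2*k+2).choose (k+1))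
    + ((p:ℤ)+1) * (p.choose (2*k+2)) * ((2*k+2).choose (k+1))
    = 4*((p:ℤ)+1) * (p.choose (2*k)) * ((2*k).choose k) := by
  rcases le_or_gt (2*k+2) p with h | h
  · obtain ⟨a, rfl⟩ : ∃ a, p = a + 2*k + 2 := ⟨p - (2*k+2), by omega⟩
    have := keyA a k
    rw [show a+2*k+2+2 = a+2*k+4 from by ring, show a+2*k+2+1 = a+2*k+3 from by ring]
    push_cast at this ⊢
    linear_combination this
  · rcases Nat.lt_or_ge p (2*k) with h2 | h2
    · have z1 : (p+2).choose (2*k+2) = 0 := Nat.choose_eq_zero_of_lt (by omega)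
      have z2 : (p+1).choose (2*k+2) = 0 := Nat.choose_eq_zero_of_lt (by omega)
      have z3 : p.choose (2*k+2) = 0 := Nat.choose_eq_zero_of_lt (by omega)
      have z4 : p.choose (2*k) = 0 := Nat.choose_eq_zero_of_lt (by omega)
      rw [z1, z2, z3, z4]; push_cast; ring
    · have hp : p = 2*k ∨ p = 2*k+1 := by omega
      rcases hp with rfl | rfl
      · have z2 : (2*k+1).choose (2*k+2) = 0 := Nat.choose_eq_zero_of_lt (by omega)
        have z3 : (2*k).choose (2*k+2) = 0 := Nat.choose_eq_zero_of_lt (by omega)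
        have e1 : (2*k+2).choose (2*k+2) = 1 := Nat.choose_self _
        have e4 : (2*k).choose (2*k) = 1 := Nat.choose_self _
        have hc := centralStep k
        rw [z2, z3, e1, e4]
        push_cast
        have hc' : ((k:ℤ)+1) * ((2*(k+1)).choose (k+1) : ℤ) = 2 * (2*k+1) * ((2*k).choose k : ℤ) := by
          exact_mod_cast congrArg (Nat.cast : ℕ → ℤ) hc
        push_cast at hc'
        have h2k : ((2*k+2).choose (k+1) : ℤ) = ((2*(k+1)).choose (k+1) : ℤ) := by
          norm_num [show 2*k+2 = 2*(k+1) from by ring]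
        rw [h2k]
        nlinarith [hc']
      · have z3 : (2*k+1).choose (2*k+2) = 0 := Nat.choose_eq_zero_of_lt (by omega)
        have e2 : (2*k+1+1).choose (2*k+2) = 1 := Nat.choose_self _
        have e1 : (2*k+1+2).choose (2*k+2) = 2*k+3 := by
          rw [show 2*k+1+2 = (2*k+2)+1 from by ring, Nat.choose_succ_self_right]
        have e4 : (2*k+1).choose (2*k) = 2*k+1 := by
          rw [show 2*k+1 = (2*k)+1 from rfl, Nat.choose_succ_self_right]
        have hc := centralStep k
        rw [z3, e2, e1, e4]
        have hc' : ((k:ℤ)+1) * ((2*(k+1)).choose (k+1) : ℤ) = 2 * (2*k+1) * ((2*k).choose k : ℤ) := by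
          exact_mod_cast congrArg (Nat.cast : ℕ → ℤ) hc
        push_cast at hc' ⊢
        have h2k : ((2*k+2).choose (k+1) : ℤ) = ((2*(k+1)).choose (k+1) : ℤ) := by
          norm_num [show 2*k+2 = 2*(k+1) from by ring]
        rw [h2k]
        nlinarith [hc']

private lemma point (b c : ℤ) (p k : ℕ) :
    ((p:ℤ)+2) * (((p+2).choose (2*(k+1)) : ℤ) * ((2*(k+1)).choose (k+1)) * b^(p+2-2*(k+1)) * c^(k+1))
    - (2*(p:ℤ)+3) * b * (((p+1).choose (2*(k+1)) : ℤ) * ((2*(k+1)).choose (k+1)) * b^(p+1-2*(k+1)) * c^(k+1))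
    + ((p:ℤ)+1) * b^2 * ((p.choose (2*(k+1)) : ℤ) * ((2*(k+1)).choose (k+1)) * b^(p-2*(k+1)) * c^(k+1))
    = 4*((p:ℤ)+1) * c * ((p.choose (2*k) : ℤ) * ((2*k).choose k) * b^(p-2*k) * c^k) := by
  have h2 : 2*(k+1) = 2*k+2 := by ring
  rw [h2]
  have hA : p+2-(2*k+2) = p-2*k := by omega
  rw [hA]
  rcases le_or_gt (2*k+2) p with h | h
  · -- all exponents behave
    have hB : p+1-(2*k+2) = p-(2*k+2)+1 := by omega
    have hR : p-2*k = p-(2*k+2)+2 := by omega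
    rw [hB, hR]
    have hk := key p k
    linear_combination hk * (b^(p-(2*k+2)+2) * c^(k+1))
  · rcases (by omega : p = 2*k+1 ∨ p ≤ 2*k) with rfl | hle
    · -- p = 2k+1 : the C term vanishes
      have z3 : (2*k+1).choose (2*k+2) = 0 := Nat.choose_eq_zero_of_lt (by omega)
      have hB : 2*k+1+1-(2*k+2) = 0 := by omega
      have hR : 2*k+1-2*k = 1 := by omega
      rw [z3, hB, hR]
      have hk := key (2*k+1) k
      rw [z3] at hk
      push_cast at hk ⊢
      linear_combination hk * (b * c^(k+1))
    · -- p ≤ 2k : B and C terms vanish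
      have z2 : (p+1).choose (2*k+2) = 0 := Nat.choose_eq_zero_of_lt (by omega)
      have z3 : p.choose (2*k+2) = 0 := Nat.choose_eq_zero_of_lt (by omega)
      have hR : p-2*k = 0 := by omega
      rw [z2, z3, hR]
      have hk := key p k
      rw [z2, z3] at hk
      push_cast at hk ⊢
      linear_combination hk * c^(k+1)

private lemma genTrinomial_eq_sum (b c : ℤ) (m N : ℕ) (h : m/2+1 ≤ N) :
    genTrinomial b c m
      = ∑ k ∈ Finset.range N,
          (m.choose (2*k) : ℤ) * ((2*k).choose k : ℤ) * b^(m-2*k) * c^k := by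
  rw [genTrinomial]
  apply Finset.sum_subset (Finset.range_subset_range.2 h)
  intro x hx hnx
  simp only [Finset.mem_range, not_lt] at hnx
  have : m.choose (2*x) = 0 := Nat.choose_eq_zero_of_lt (by omega)
  simp [this]

theorem stmt_10 (b c : ℤ) (n : ℕ) (hn : 1 ≤ n) :
    ((n : ℤ) + 1) * genTrinomial b c (n + 1) =
      (2 * (n : ℤ) + 1) * b * genTrinomial b c n -
        (n : ℤ) * (b ^ 2 - 4 * c) * genTrinomial b c (n - 1) := by
  obtain ⟨p, rfl⟩ : ∃ p, n = p + 1 := ⟨n - 1, by omega⟩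
  have hm : p + 1 - 1 = p := by omega
  rw [hm]
  rw [genTrinomial_eq_sum b c (p+1+1) (p+3) (by omega),
      genTrinomial_eq_sum b c (p+1) (p+3) (by omega),
      genTrinomial_eq_sum b c p (p+3) (by omega)]
  set A : ℕ → ℤ := fun k => ((p+2).choose (2*k) : ℤ) * ((2*k).choose k : ℤ) * b^(p+2-2*k) * c^k with hA
  set B : ℕ → ℤ := fun k => ((p+1).choose (2*k) : ℤ) * ((2*k).choose k : ℤ) * b^(p+1-2*k) * c^k with hB
  set C : ℕ → ℤ := fun k => (p.choose (2*k) : ℤ) * ((2*k).choose k : ℤ) * b^(p-2*k) * c^k with hC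
  have main : ∑ k ∈ Finset.range (p+3),
        (((p:ℤ)+2) * A k - (2*(p:ℤ)+3) * b * B k + ((p:ℤ)+1) * b^2 * C k)
      = ∑ k ∈ Finset.range (p+3), (4*((p:ℤ)+1) * c * C k) := by
    rw [Finset.sum_range_succ' (fun k => ((p:ℤ)+2) * A k - (2*(p:ℤ)+3) * b * B k + ((p:ℤ)+1) * b^2 * C k) (p+2)]
    rw [Finset.sum_range_succ (fun k => 4*((p:ℤ)+1) * c * C k) (p+2)]
    have hzero : ((p:ℤ)+2) * A 0 - (2*(p:ℤ)+3) * b * B 0 + ((p:ℤ)+1) * b^2 * C 0 = 0 := by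
      simp only [hA, hB, hC, Nat.mul_zero, Nat.choose_zero_right, Nat.sub_zero,
        Nat.cast_one, pow_zero, mul_one, one_mul]
      ring
    have hlast : 4*((p:ℤ)+1) * c * C (p+2) = 0 := by
      have : p.choose (2*(p+2)) = 0 := Nat.choose_eq_zero_of_lt (by omega)
      simp [hC, this]
    rw [hzero, hlast, add_zero, add_zero]
    refine Finset.sum_congr rfl fun k _ => ?_
    simp only [hA, hB, hC]
    exact point b c p k
  have hG : ∑ k ∈ Finset.range (p+3),
        (((p:ℤ)+2) * A k - (2*(p:ℤ)+3) * b * B k + ((p:ℤ)+1) * b^2 * C k)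
      = ((p:ℤ)+2) * (∑ k ∈ Finset.range (p+3), A k)
        - (2*(p:ℤ)+3) * b * (∑ k ∈ Finset.range (p+3), B k)
        + ((p:ℤ)+1) * b^2 * (∑ k ∈ Finset.range (p+3), C k) := by
    rw [Finset.sum_add_distrib, Finset.sum_sub_distrib, ← Finset.mul_sum, ← Finset.mul_sum,
      ← Finset.mul_sum]
  have hH : ∑ k ∈ Finset.range (p+3), (4*((p:ℤ)+1) * c * C k)
      = 4*((p:ℤ)+1) * c * (∑ k ∈ Finset.range (p+3), C k) := by
    rw [← Finset.mul_sum]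
  rw [hG, hH] at main
  push_cast
  linear_combination main
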